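/- Unbiasedness of the outcome-regression estimating function (equation (10), proved in the proof of Proposition 3). Assume Y₀ and Z are conditionally independent given C. Define m_g(z,c) = Σ_y g(y,c)·p(y | A=1, z, c) and E[w | c] = Σ_z w(z,c)·p(z | c). Then for all functions g : 𝒴 × 𝒞 → ℝ and w : 𝒵 × 𝒞 → ℝ: Σ_{a,y,z,c} p(a,y,z,c) · ( w(z,c) − E[w | c] ) · ( a·m_g(z,c) + (1−a)·g(y,c) ) = 0. -/

import Mathlib

private lemma per_c {Y Z C : Type*} [Fintype Y] [Fintype Z] [Fintype C]
    [Nonempty Y] [Nonempty Z] [Nonempty C]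
    (p : Bool → Y → Z → C → ℝ)
    (hpos : ∀ a y z c, 0 < p a y z c)
    (hCI : ∀ (y : Y) (z : Z) (c : C),
        (∑ a : Bool, p a y z c) / (∑ a : Bool, ∑ y' : Y, ∑ z' : Z, p a y' z' c)
          = ((∑ a : Bool, ∑ z' : Z, p a y z' c)
                / (∑ a : Bool, ∑ y' : Y, ∑ z' : Z, p a y' z' c))
            * ((∑ a : Bool, ∑ y' : Y, p a y' z c)
                / (∑ a : Bool, ∑ y' : Y, ∑ z' : Z, p a y' z' c)))
    (g : Y → C → ℝ) (w : Z → C → ℝ) (c : C) :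
    ∑ a : Bool, ∑ y : Y, ∑ z : Z,
      p a y z c * (w z c - (∑ z' : Z, w z' c * ((∑ a : Bool, ∑ y' : Y, p a y' z' c)
          / (∑ a : Bool, ∑ y' : Y, ∑ z' : Z, p a y' z' c)))) *
        ((if a then (1 : ℝ) else 0) *
            (∑ y' : Y, g y' c * (p true y' z c / ∑ y'' : Y, p true y'' z c))
          + (1 - if a then (1 : ℝ) else 0) * g y c) = 0 := by
  set pC : ℝ := ∑ a : Bool, ∑ y' : Y, ∑ z' : Z, p a y' z' c with hpCdef
  have hpCpos : 0 < pC :=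
    Finset.sum_pos (fun a _ => Finset.sum_pos (fun y _ =>
      Finset.sum_pos (fun z _ => hpos a y z c) Finset.univ_nonempty) Finset.univ_nonempty)
      Finset.univ_nonempty
  have hpC : pC ≠ 0 := ne_of_gt hpCpos
  set E : ℝ := ∑ z' : Z, w z' c * ((∑ a : Bool, ∑ y' : Y, p a y' z' c) / pC) with hEdef
  have hP1 : ∀ z : Z, (∑ y' : Y, p true y' z c) ≠ 0 := fun z =>
    ne_of_gt (Finset.sum_pos (fun y _ => hpos true y z c) Finset.univ_nonempty)
  have hfac : ∀ (y : Y) (z : Z),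
      p true y z c + p false y z c
        = (∑ a : Bool, ∑ z' : Z, p a y z' c) * ((∑ a : Bool, ∑ y' : Y, p a y' z c) / pC) := by
    intro y z
    have h := hCI y z c
    rw [← hpCdef] at h
    field_simp at h
    simp only [Fintype.sum_bool] at h ⊢
    rw [← mul_div_assoc, eq_div_iff hpC]
    apply mul_right_cancel₀ hpC
    linear_combination pC * h
  have hEw : ∑ z : Z, (∑ a : Bool, ∑ y' : Y, p a y' z c) * (w z c - E) = 0 := by
    have h1 : ∑ z : Z, (∑ a : Bool, ∑ y' : Y, p a y' z c) * w z c = E * pC := by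
      rw [hEdef, Finset.sum_mul]
      refine Finset.sum_congr rfl fun z _ => ?_
      field_simp
    have h2 : ∑ z : Z, (∑ a : Bool, ∑ y' : Y, p a y' z c) = pC := by
      rw [hpCdef, Finset.sum_comm]
      exact Finset.sum_congr rfl fun a _ => Finset.sum_comm
    simp only [mul_sub, Finset.sum_sub_distrib, h1, ← Finset.sum_mul, h2]
    ring
  rw [Fintype.sum_bool]
  simp only [reduceIte, Bool.false_eq_true, if_false, if_true, sub_self, one_mul, zero_mul,
    mul_zero, add_zero, zero_add, sub_zero]
  -- the a = true double sum reduces to the same shape as the a = false one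
  have htrue :
      ∑ y : Y, ∑ z : Z, p true y z c * (w z c - E) *
          (∑ y' : Y, g y' c * (p true y' z c / ∑ y'' : Y, p true y'' z c))
        = ∑ y : Y, ∑ z : Z, p true y z c * (w z c - E) * g y c := by
    rw [Finset.sum_comm]
    conv_rhs => rw [Finset.sum_comm]
    refine Finset.sum_congr rfl fun z _ => ?_
    have lhs1 : ∑ y : Y, p true y z c * (w z c - E) *
          (∑ y' : Y, g y' c * (p true y' z c / ∑ y'' : Y, p true y'' z c))
        = (∑ y : Y, p true y z c) * (w z c - E) *
          (∑ y' : Y, g y' c * (p true y' z c / ∑ y'' : Y, p true y'' z c)) := by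
      rw [Finset.sum_mul, Finset.sum_mul]
    rw [lhs1, Finset.mul_sum]
    refine Finset.sum_congr rfl fun y _ => ?_
    field_simp [hP1 z]
  rw [htrue, ← Finset.sum_add_distrib]
  have step : ∀ y : Y, ∑ z : Z, (p true y z c * (w z c - E) * g y c
        + p false y z c * (w z c - E) * g y c) = 0 := by
    intro y
    have : ∀ z : Z, p true y z c * (w z c - E) * g y c
          + p false y z c * (w z c - E) * g y c
        = (∑ a : Bool, ∑ z' : Z, p a y z' c) * g y c / pC
            * ((∑ a : Bool, ∑ y' : Y, p a y' z c) * (w z c - E)) := by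
      intro z
      have h := hfac y z
      calc p true y z c * (w z c - E) * g y c + p false y z c * (w z c - E) * g y c
          = (p true y z c + p false y z c) * ((w z c - E) * g y c) := by ring
        _ = _ := by rw [h]; ring
    simp only [this, ← Finset.mul_sum, hEw, mul_zero]
  refine Finset.sum_eq_zero fun y _ => ?_
  rw [← Finset.sum_add_distrib]
  exact step y

private lemma sum4_comm {α β γ δ : Type*} [Fintype α] [Fintype β] [Fintype γ] [Fintype δ]
    (f : α → β → γ → δ → ℝ) :
    ∑ a : α, ∑ b : β, ∑ c : γ, ∑ d : δ, f a b c d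
      = ∑ d : δ, ∑ a : α, ∑ b : β, ∑ c : γ, f a b c d := by
  calc ∑ a : α, ∑ b : β, ∑ c : γ, ∑ d : δ, f a b c d
      = ∑ a : α, ∑ b : β, ∑ d : δ, ∑ c : γ, f a b c d :=
        Finset.sum_congr rfl fun a _ => Finset.sum_congr rfl fun b _ => Finset.sum_comm
    _ = ∑ a : α, ∑ d : δ, ∑ b : β, ∑ c : γ, f a b c d :=
        Finset.sum_congr rfl fun a _ => Finset.sum_comm
    _ = ∑ d : δ, ∑ a : α, ∑ b : β, ∑ c : γ, f a b c d := Finset.sum_comm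


/-- Unbiasedness of the outcome-regression estimating function (equation (10)):
if `Y₀` and `Z` are conditionally independent given `C`, then for all `g` and
`w`, `Σ p(a,y,z,c) (w(z,c) - E[w|c]) (a m_g(z,c) + (1-a) g(y,c)) = 0`, where
`m_g(z,c) = Σ_y g(y,c) p(y | A=1,z,c)` and `E[w|c] = Σ_z w(z,c) p(z|c)`. -/
theorem outcome_regression_estimating_function_unbiased
    {Y Z C : Type*} [Fintype Y] [Fintype Z] [Fintype C]
    [Nonempty Y] [Nonempty Z] [Nonempty C]
    (p : Bool → Y → Z → C → ℝ)
    (hpos : ∀ a y z c, 0 < p a y z c)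
    (hsum : ∑ a : Bool, ∑ y : Y, ∑ z : Z, ∑ c : C, p a y z c = 1)
    -- conditional independence of `Y₀` and `Z` given `C`:
    -- `p(y, z | c) = p(y | c) p(z | c)` for all `y, z, c`
    (hCI : ∀ (y : Y) (z : Z) (c : C),
        (∑ a : Bool, p a y z c) / (∑ a : Bool, ∑ y' : Y, ∑ z' : Z, p a y' z' c)
          = ((∑ a : Bool, ∑ z' : Z, p a y z' c)
                / (∑ a : Bool, ∑ y' : Y, ∑ z' : Z, p a y' z' c))
            * ((∑ a : Bool, ∑ y' : Y, p a y' z c)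
                / (∑ a : Bool, ∑ y' : Y, ∑ z' : Z, p a y' z' c)))
    (g : Y → C → ℝ) (w : Z → C → ℝ) :
    -- `m_g(z,c) = Σ_y g(y,c) p(y | A=1, z, c)`
    let mg : Z → C → ℝ :=
      fun z c => ∑ y : Y, g y c * (p true y z c / ∑ y' : Y, p true y' z c)
    -- `E[w | c] = Σ_z w(z,c) p(z | c)`
    let Ew : C → ℝ :=
      fun c => ∑ z : Z, w z c * ((∑ a : Bool, ∑ y' : Y, p a y' z c)
          / (∑ a : Bool, ∑ y' : Y, ∑ z' : Z, p a y' z' c))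
    ∑ a : Bool, ∑ y : Y, ∑ z : Z, ∑ c : C,
      p a y z c * (w z c - Ew c) *
        ((if a then (1 : ℝ) else 0) * mg z c
          + (1 - if a then (1 : ℝ) else 0) * g y c) = 0 := by
  intro mg Ew
  rw [sum4_comm]
  exact Finset.sum_eq_zero fun c _ => per_c p hpos hCI g w c
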